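/- Let Ω, T, A be as in the setting of uniformly hyperbolic cocycles (Ω compact metric, T homeomorphism, A: Ω → GL(2,ℂ) continuous with |det A| ≡ 1). The set of pairs (T, A) for which the cocycle (T,A) admits no Sacker–Sell solution is open in Homeo(Ω) × C(Ω, G) with the uniform topologies. -/

import Mathlib

noncomputable section

abbrev E2 := EuclideanSpace ℂ (Fin 2)
abbrev M2 := Matrix (Fin 2) (Fin 2) ℂ

noncomputable def opNorm (M : M2) : ℝ :=
  ‖Matrix.toEuclideanCLM (𝕜 := ℂ) (n := Fin 2) M‖

noncomputable def mulV (M : M2) (v : E2) : E2 :=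
  Matrix.toEuclideanCLM (𝕜 := ℂ) (n := Fin 2) M v

variable {Ω : Type*} [MetricSpace Ω]

noncomputable def fwd (T : Ω ≃ₜ Ω) (A : Ω → M2) : ℕ → Ω → M2
  | 0, _ => 1
  | n + 1, ω => fwd T A n (T ω) * A ω

noncomputable def coc (T : Ω ≃ₜ Ω) (A : Ω → M2) (n : ℤ) (ω : Ω) : M2 :=
  if 0 ≤ n then fwd T A n.toNat ω
  else (fwd T A (-n).toNat ((⇑T.symm)^[(-n).toNat] ω))⁻¹

open Filter Topology

/-! auxiliary machinery -/

noncomputable def eL : M2 →ₗ[ℂ] (E2 →L[ℂ] E2) where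
  toFun M := Matrix.toEuclideanCLM (𝕜 := ℂ) (n := Fin 2) M
  map_add' x y := map_add _ x y
  map_smul' c x := map_smul _ c x

noncomputable def eLsymm : (E2 →L[ℂ] E2) →ₗ[ℂ] M2 where
  toFun f := (Matrix.toEuclideanCLM (𝕜 := ℂ) (n := Fin 2)).symm f
  map_add' x y := map_add _ x y
  map_smul' c x := map_smul _ c x

lemma cont_e : Continuous (fun M : M2 => Matrix.toEuclideanCLM (𝕜 := ℂ) (n := Fin 2) M) :=
  eL.continuous_of_finiteDimensional

lemma cont_esymm :
    Continuous (fun f : E2 →L[ℂ] E2 => (Matrix.toEuclideanCLM (𝕜 := ℂ) (n := Fin 2)).symm f) :=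
  eLsymm.continuous_of_finiteDimensional

set_option maxHeartbeats 1000000 in
lemma tendsto_mulV {Mk : ℕ → M2} {M : M2} {vk : ℕ → E2} {v : E2}
    (hM : Tendsto Mk atTop (𝓝 M)) (hv : Tendsto vk atTop (𝓝 v)) :
    Tendsto (fun k => mulV (Mk k) (vk k)) atTop (𝓝 (mulV M v)) := by
  have hap : Continuous (fun p : (E2 →L[ℂ] E2) × E2 => p.1 p.2) :=
    isBoundedBilinearMap_apply.continuous
  have hc : Continuous (fun p : M2 × E2 => mulV p.1 p.2) :=
    hap.comp ((cont_e.comp continuous_fst).prodMk continuous_snd)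
  have := (hc.tendsto (M, v)).comp (hM.prodMk_nhds hv)
  exact this

lemma tendsto_apply_T {T : Ω ≃ₜ Ω} {Tk : ℕ → Ω ≃ₜ Ω} {δ : ℕ → ℝ}
    (hδ : Tendsto δ atTop (𝓝 0))
    (hT : ∀ k ω, dist (Tk k ω) (T ω) < δ k)
    {x : ℕ → Ω} {x0 : Ω} (hx : Tendsto x atTop (𝓝 x0)) :
    Tendsto (fun k => Tk k (x k)) atTop (𝓝 (T x0)) := by
  rw [tendsto_iff_dist_tendsto_zero]
  have h1 : Tendsto (fun k => dist (T (x k)) (T x0)) atTop (𝓝 0) :=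
    tendsto_iff_dist_tendsto_zero.1 ((T.continuous.tendsto x0).comp hx)
  refine squeeze_zero (fun k => dist_nonneg) (fun k => ?_) (by simpa using hδ.add h1)
  calc dist (Tk k (x k)) (T x0)
      ≤ dist (Tk k (x k)) (T (x k)) + dist (T (x k)) (T x0) := dist_triangle _ _ _
    _ ≤ δ k + dist (T (x k)) (T x0) := by
        have := (hT k (x k)).le; gcongr

lemma tendsto_apply_symm [CompactSpace Ω] {T : Ω ≃ₜ Ω} {Tk : ℕ → Ω ≃ₜ Ω} {δ : ℕ → ℝ}
    (hδ : Tendsto δ atTop (𝓝 0))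
    (hT : ∀ k ω, dist (Tk k ω) (T ω) < δ k)
    {x : ℕ → Ω} {x0 : Ω} (hx : Tendsto x atTop (𝓝 x0)) :
    Tendsto (fun k => (Tk k).symm (x k)) atTop (𝓝 (T.symm x0)) := by
  set y := fun k => (Tk k).symm (x k) with hy
  apply tendsto_of_subseq_tendsto
  intro ns hns
  obtain ⟨z, -, ms, hms, hz⟩ := isCompact_univ.tendsto_subseq
    (x := fun n => y (ns n)) (fun n => Set.mem_univ _)
  refine ⟨ms, ?_⟩
  have hns' : Tendsto (fun n => ns (ms n)) atTop atTop := hns.comp hms.tendsto_atTop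
  have hTz : Tendsto (fun n => Tk (ns (ms n)) (y (ns (ms n)))) atTop (𝓝 (T z)) := by
    exact tendsto_apply_T (Tk := fun n => Tk (ns (ms n))) (δ := fun n => δ (ns (ms n)))
      (hδ.comp hns') (fun k ω => hT _ ω) hz
  have heq : (fun n => Tk (ns (ms n)) (y (ns (ms n)))) = fun n => x (ns (ms n)) := by
    funext n; simp [hy]
  rw [heq] at hTz
  have hx' : Tendsto (fun n => x (ns (ms n))) atTop (𝓝 x0) := hx.comp hns'
  have : T z = x0 := tendsto_nhds_unique hTz hx'
  have : z = T.symm x0 := by rw [← this]; simp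
  rwa [← this]

lemma tendsto_symm_iter [CompactSpace Ω] {T : Ω ≃ₜ Ω} {Tk : ℕ → Ω ≃ₜ Ω} {δ : ℕ → ℝ}
    (hδ : Tendsto δ atTop (𝓝 0))
    (hT : ∀ k ω, dist (Tk k ω) (T ω) < δ k)
    {x : ℕ → Ω} {x0 : Ω} (hx : Tendsto x atTop (𝓝 x0)) (m : ℕ) :
    Tendsto (fun k => (⇑(Tk k).symm)^[m] (x k)) atTop (𝓝 ((⇑T.symm)^[m] x0)) := by
  induction m with
  | zero => simpa using hx
  | succ m ih =>
      simp only [Function.iterate_succ_apply']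
      exact tendsto_apply_symm hδ hT ih

lemma tendsto_apply_A {A : Ω → M2} (hA : Continuous A)
    {Ak : ℕ → Ω → M2} {δ : ℕ → ℝ}
    (hδ : Tendsto δ atTop (𝓝 0))
    (hAk : ∀ k ω, opNorm (Ak k ω - A ω) < δ k)
    {x : ℕ → Ω} {x0 : Ω} (hx : Tendsto x atTop (𝓝 x0)) :
    Tendsto (fun k => Ak k (x k)) atTop (𝓝 (A x0)) := by
  set e := fun M : M2 => Matrix.toEuclideanCLM (𝕜 := ℂ) (n := Fin 2) M with he
  have h0 : Tendsto (fun k => e (Ak k (x k)) - e (A (x k))) atTop (𝓝 0) := by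
    rw [tendsto_zero_iff_norm_tendsto_zero]
    refine squeeze_zero (fun k => norm_nonneg _) (fun k => ?_) hδ
    have : e (Ak k (x k)) - e (A (x k)) = e (Ak k (x k) - A (x k)) := (map_sub _ _ _).symm
    rw [this]
    exact (hAk k (x k)).le
  have h1 : Tendsto (fun k => e (A (x k))) atTop (𝓝 (e (A x0))) :=
    ((cont_e.comp hA).tendsto x0).comp hx
  have h2 : Tendsto (fun k => e (Ak k (x k))) atTop (𝓝 (e (A x0))) := by
    have := h0.add h1
    simpa using this
  have h3 := (cont_esymm.tendsto (e (A x0))).comp h2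
  have hsymm : ∀ M : M2,
      (Matrix.toEuclideanCLM (𝕜 := ℂ) (n := Fin 2)).symm (e M) = M := fun M => by
    simp [he]
  have h4 : Tendsto (fun k => (Matrix.toEuclideanCLM (𝕜 := ℂ) (n := Fin 2)).symm
      (e (Ak k (x k)))) atTop
      (𝓝 ((Matrix.toEuclideanCLM (𝕜 := ℂ) (n := Fin 2)).symm (e (A x0)))) := h3
  simpa [hsymm] using h4

lemma tendsto_fwd {T : Ω ≃ₜ Ω} {A : Ω → M2} (hA : Continuous A)
    {Tk : ℕ → Ω ≃ₜ Ω} {Ak : ℕ → Ω → M2} {δ : ℕ → ℝ}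
    (hδ : Tendsto δ atTop (𝓝 0))
    (hT : ∀ k ω, dist (Tk k ω) (T ω) < δ k)
    (hAk : ∀ k ω, opNorm (Ak k ω - A ω) < δ k)
    (m : ℕ) :
    ∀ {x : ℕ → Ω} {x0 : Ω}, Tendsto x atTop (𝓝 x0) →
    Tendsto (fun k => fwd (Tk k) (Ak k) m (x k)) atTop (𝓝 (fwd T A m x0)) := by
  induction m with
  | zero => intro x x0 hx; simp only [fwd]; exact tendsto_const_nhds
  | succ m ih =>
      intro x x0 hx
      simp only [fwd]
      exact (ih (tendsto_apply_T hδ hT hx)).mul (tendsto_apply_A hA hδ hAk hx)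

lemma det_fwd_ne {T : Ω ≃ₜ Ω} {A : Ω → M2} (hinv : ∀ ω, IsUnit (A ω)) (m : ℕ) :
    ∀ ω, (fwd T A m ω).det ≠ 0 := by
  induction m with
  | zero => intro ω; simp [fwd]
  | succ m ih =>
      intro ω
      simp only [fwd, Matrix.det_mul]
      exact mul_ne_zero (ih (T ω)) ((Matrix.isUnit_iff_isUnit_det _).1 (hinv ω)).ne_zero

lemma tendsto_inv_matrix {Mk : ℕ → M2} {M : M2} (hdet : M.det ≠ 0)
    (h : Tendsto Mk atTop (𝓝 M)) : Tendsto (fun k => (Mk k)⁻¹) atTop (𝓝 M⁻¹) := by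
  have hc : ContinuousAt Inv.inv M := by
    apply continuousAt_matrix_inv
    rw [Ring.inverse_eq_inv']
    exact continuousAt_inv₀ hdet
  exact (hc.tendsto).comp h

lemma tendsto_coc [CompactSpace Ω] {T : Ω ≃ₜ Ω} {A : Ω → M2} (hA : Continuous A)
    (hinv : ∀ ω, IsUnit (A ω))
    {Tk : ℕ → Ω ≃ₜ Ω} {Ak : ℕ → Ω → M2} {δ : ℕ → ℝ}
    (hδ : Tendsto δ atTop (𝓝 0))
    (hT : ∀ k ω, dist (Tk k ω) (T ω) < δ k)
    (hAk : ∀ k ω, opNorm (Ak k ω - A ω) < δ k)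
    (n : ℤ) {x : ℕ → Ω} {x0 : Ω} (hx : Tendsto x atTop (𝓝 x0)) :
    Tendsto (fun k => coc (Tk k) (Ak k) n (x k)) atTop (𝓝 (coc T A n x0)) := by
  by_cases hn : 0 ≤ n
  · simp only [coc, if_pos hn]
    exact tendsto_fwd hA hδ hT hAk n.toNat hx
  · simp only [coc, if_neg hn]
    exact tendsto_inv_matrix (det_fwd_ne hinv _ _)
      (tendsto_fwd hA hδ hT hAk (-n).toNat (tendsto_symm_iter hδ hT hx (-n).toNat))

/-- uniform hyperbolicity (equivalently, absence of Sacker–Sell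
solutions) is open in `Homeo(Ω) × C(Ω, G)` with the uniform topologies: if
`(T,A)` has no Sacker–Sell solution, then every pair `(T',A')` uniformly
`δ`-close to `(T,A)` also has none. -/
theorem no_SackerSell_open [CompactSpace Ω]
    (T : Ω ≃ₜ Ω) (A : Ω → M2) (hA : Continuous A)
    (hinv : ∀ ω, IsUnit (A ω)) (hdet : ∀ ω, ‖(A ω).det‖ = 1)
    (hnoss : ∀ (ω : Ω) (v : E2), ‖v‖ = 1 → ∃ n : ℤ, 1 < ‖mulV (coc T A n ω) v‖) :
    ∃ δ : ℝ, 0 < δ ∧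
      ∀ (T' : Ω ≃ₜ Ω) (A' : Ω → M2), Continuous A' →
        (∀ ω, IsUnit (A' ω)) → (∀ ω, ‖(A' ω).det‖ = 1) →
        (∀ ω, dist (T' ω) (T ω) < δ) →
        (∀ ω, opNorm (A' ω - A ω) < δ) →
        ∀ (ω : Ω) (v : E2), ‖v‖ = 1 → ∃ n : ℤ, 1 < ‖mulV (coc T' A' n ω) v‖ := by
  by_contra hcon
  push_neg at hcon
  have H : ∀ k : ℕ, ∃ (T' : Ω ≃ₜ Ω) (A' : Ω → M2), Continuous A' ∧
      (∀ ω, IsUnit (A' ω)) ∧ (∀ ω, ‖(A' ω).det‖ = 1) ∧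
      (∀ ω, dist (T' ω) (T ω) < ((k : ℝ) + 1)⁻¹) ∧
      (∀ ω, opNorm (A' ω - A ω) < ((k : ℝ) + 1)⁻¹) ∧
      ∃ ω v, ‖v‖ = 1 ∧ ∀ n : ℤ, ‖mulV (coc T' A' n ω) v‖ ≤ 1 := by
    intro k
    obtain ⟨T', A', h1, h2, h3, h4, h5, h6⟩ := hcon (((k : ℝ) + 1)⁻¹) (by positivity)
    exact ⟨T', A', h1, h2, h3, h4, h5, h6⟩
  choose T' A' hC hU hD hTd hAd ω' v' hv1 hle using H
  -- extract convergent subsequences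
  obtain ⟨ω0, -, φ, hφ, hωlim⟩ := isCompact_univ.tendsto_subseq
    (x := ω') (fun k => Set.mem_univ _)
  have hsphere : ∀ k, v' (φ k) ∈ Metric.sphere (0 : E2) 1 := by
    intro k; simpa [mem_sphere_zero_iff_norm] using hv1 (φ k)
  obtain ⟨v0, hv0mem, ψ, hψ, hvlim⟩ := (isCompact_sphere (0 : E2) 1).tendsto_subseq hsphere
  set θ : ℕ → ℕ := φ ∘ ψ with hθ
  have hθmono : StrictMono θ := hφ.comp hψ
  have hωθ : Tendsto (fun k => ω' (θ k)) atTop (𝓝 ω0) := hωlim.comp hψ.tendsto_atTop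
  have hvθ : Tendsto (fun k => v' (θ k)) atTop (𝓝 v0) := hvlim
  have hv0 : ‖v0‖ = 1 := by simpa [mem_sphere_zero_iff_norm] using hv0mem
  obtain ⟨n, hn⟩ := hnoss ω0 v0 hv0
  have hδθ : Tendsto (fun k => ((θ k : ℝ) + 1)⁻¹) atTop (𝓝 0) := by
    have h1 : Tendsto (fun k : ℕ => ((k : ℝ) + 1)⁻¹) atTop (𝓝 0) := by
      have := tendsto_one_div_add_atTop_nhds_zero_nat (𝕜 := ℝ)
      simpa [one_div] using this
    exact h1.comp hθmono.tendsto_atTop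
  have hcoc : Tendsto (fun k => coc (T' (θ k)) (A' (θ k)) n (ω' (θ k))) atTop
      (𝓝 (coc T A n ω0)) :=
    tendsto_coc hA hinv hδθ (fun k ω => hTd (θ k) ω) (fun k ω => hAd (θ k) ω) n hωθ
  have hlim : Tendsto (fun k => ‖mulV (coc (T' (θ k)) (A' (θ k)) n (ω' (θ k))) (v' (θ k))‖)
      atTop (𝓝 ‖mulV (coc T A n ω0) v0‖) := (tendsto_mulV hcoc hvθ).norm
  have : ‖mulV (coc T A n ω0) v0‖ ≤ 1 :=
    le_of_tendsto hlim (Filter.Eventually.of_forall fun k => hle (θ k) n)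
  linarith

end
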